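/- Let V, V₀ ∈ ℝ^{n×k} satisfy VᵀV = I_k and V₀ᵀV₀ = I_k, let M ∈ ℝ^{n×n} satisfy (I_n − VVᵀ) M (I_n − V₀V₀ᵀ) = 0, and let W ∈ ℝ^{n×n} be symmetric. Then ⟨M, W⟩ ≤ (3/2)‖M‖_F² + 2k·‖W‖². -/

import Mathlib

open Matrix

/-- Frobenius norm squared of a real matrix. -/
noncomputable def frobSq {n m : ℕ} (A : Matrix (Fin n) (Fin m) ℝ) : ℝ :=
  ∑ i, ∑ j, (A i j) ^ 2

/-- Trace inner product on square real matrices. -/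
noncomputable def mip {n : ℕ} (A B : Matrix (Fin n) (Fin n) ℝ) : ℝ :=
  Matrix.trace (A * Bᵀ)

/-- Spectral norm (ℓ²→ℓ² operator norm) of a real square matrix. -/
noncomputable def specNorm {n : ℕ} (A : Matrix (Fin n) (Fin n) ℝ) : ℝ :=
  ‖Matrix.toEuclideanCLM (𝕜 := ℝ) A‖


lemma sumSq_eq_dot {m : ℕ} (z : Fin m → ℝ) : ∑ j, (z j)^2 = z ⬝ᵥ z := by
  simp [dotProduct, sq]

lemma dshift {a b : ℕ} (A : Matrix (Fin a) (Fin b) ℝ) (x : Fin a → ℝ) (z : Fin b → ℝ) :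
    (Aᵀ *ᵥ x) ⬝ᵥ z = x ⬝ᵥ (A *ᵥ z) := by
  rw [Matrix.dotProduct_mulVec, Matrix.mulVec_transpose]

lemma frobSq_unitary_left {n k m : ℕ} (V : Matrix (Fin n) (Fin k) ℝ) (hV : Vᵀ * V = 1)
    (B : Matrix (Fin k) (Fin m) ℝ) : frobSq (V * B) = frobSq B := by
  unfold frobSq
  rw [Finset.sum_comm, Finset.sum_comm (s := Finset.univ) (t := Finset.univ)
    (f := fun i j => (B i j)^2)]
  refine Finset.sum_congr rfl fun j _ => ?_
  have h1 : ∀ i, (V * B) i j = (V *ᵥ fun l => B l j) i := by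
    intro i; simp [mul_apply, mulVec, dotProduct]
  calc ∑ i, ((V * B) i j)^2 = (V *ᵥ fun l => B l j) ⬝ᵥ (V *ᵥ fun l => B l j) := by
        rw [← sumSq_eq_dot]; exact Finset.sum_congr rfl fun i _ => by rw [h1]
    _ = (fun l => B l j) ⬝ᵥ (Vᵀ *ᵥ (V *ᵥ fun l => B l j)) := by
        have := dshift Vᵀ (fun l => B l j) (V *ᵥ fun l => B l j)
        rwa [transpose_transpose] at this
    _ = (fun l => B l j) ⬝ᵥ (fun l => B l j) := by
        rw [Matrix.mulVec_mulVec, hV, Matrix.one_mulVec]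
    _ = ∑ i, (B i j)^2 := (sumSq_eq_dot _).symm

lemma vec_contract {n k : ℕ} (V : Matrix (Fin n) (Fin k) ℝ) (hV : Vᵀ * V = 1)
    (x : Fin n → ℝ) : ∑ i, ((Vᵀ *ᵥ x) i)^2 ≤ ∑ j, (x j)^2 := by
  have h1 : (Vᵀ *ᵥ x) ⬝ᵥ (Vᵀ *ᵥ x) = x ⬝ᵥ (V *ᵥ (Vᵀ *ᵥ x)) := dshift V x (Vᵀ *ᵥ x)
  have h2' : Vᵀ *ᵥ (V *ᵥ (Vᵀ *ᵥ x)) = Vᵀ *ᵥ x := by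
    rw [Matrix.mulVec_mulVec, hV, Matrix.one_mulVec]
  have h2 : (V *ᵥ (Vᵀ *ᵥ x)) ⬝ᵥ (V *ᵥ (Vᵀ *ᵥ x)) = x ⬝ᵥ (V *ᵥ (Vᵀ *ᵥ x)) := by
    have h := dshift Vᵀ (Vᵀ *ᵥ x) (V *ᵥ (Vᵀ *ᵥ x))
    rw [transpose_transpose, h2'] at h
    rw [h, h1]
  have h3 : 0 ≤ (x - V *ᵥ (Vᵀ *ᵥ x)) ⬝ᵥ (x - V *ᵥ (Vᵀ *ᵥ x)) := by
    rw [← sumSq_eq_dot]; exact Finset.sum_nonneg fun i _ => sq_nonneg _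
  have h4 : (x - V *ᵥ (Vᵀ *ᵥ x)) ⬝ᵥ (x - V *ᵥ (Vᵀ *ᵥ x)) =
      x ⬝ᵥ x - 2 * (x ⬝ᵥ (V *ᵥ (Vᵀ *ᵥ x))) + (V *ᵥ (Vᵀ *ᵥ x)) ⬝ᵥ (V *ᵥ (Vᵀ *ᵥ x)) := by
    rw [sub_dotProduct, dotProduct_sub, dotProduct_sub,
      dotProduct_comm (V *ᵥ (Vᵀ *ᵥ x)) x]; ring
  rw [sumSq_eq_dot, sumSq_eq_dot, h1]
  nlinarith [h3, h4, h2]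

lemma frobSq_contract_left {n k m : ℕ} (V : Matrix (Fin n) (Fin k) ℝ) (hV : Vᵀ * V = 1)
    (B : Matrix (Fin n) (Fin m) ℝ) : frobSq (Vᵀ * B) ≤ frobSq B := by
  unfold frobSq
  rw [Finset.sum_comm, Finset.sum_comm (s := Finset.univ) (t := Finset.univ)
    (f := fun i j => (B i j)^2)]
  refine Finset.sum_le_sum fun j _ => ?_
  have h1 : ∀ i, (Vᵀ * B) i j = (Vᵀ *ᵥ fun l => B l j) i := by
    intro i; simp [mul_apply, mulVec, dotProduct]
  calc ∑ i, ((Vᵀ * B) i j)^2 = ∑ i, ((Vᵀ *ᵥ fun l => B l j) i)^2 :=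
        Finset.sum_congr rfl fun i _ => by rw [h1]
    _ ≤ ∑ i, (B i j)^2 := vec_contract V hV _

lemma frobSq_transpose {a b : ℕ} (A : Matrix (Fin a) (Fin b) ℝ) : frobSq Aᵀ = frobSq A := by
  unfold frobSq; rw [Finset.sum_comm]; simp only [transpose_apply]

lemma spec_bound {n : ℕ} (W : Matrix (Fin n) (Fin n) ℝ) (y : Fin n → ℝ) :
    ∑ j, ((W *ᵥ y) j)^2 ≤ (specNorm W)^2 * ∑ j, (y j)^2 := by
  have hnorm : ∀ z : Fin n → ℝ, ‖(WithLp.equiv 2 (Fin n → ℝ)).symm z‖^2 = ∑ j, (z j)^2 := by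
    intro z
    rw [EuclideanSpace.norm_eq, Real.sq_sqrt (Finset.sum_nonneg fun i _ => by positivity)]
    simp [sq_abs]
  have h := (Matrix.toEuclideanCLM (𝕜 := ℝ) W).le_opNorm ((WithLp.equiv 2 (Fin n → ℝ)).symm y)
  change ‖(WithLp.equiv 2 (Fin n → ℝ)).symm ((Matrix.toLin' W) y)‖ ≤ _ at h
  have hy : ‖(WithLp.equiv 2 (Fin n → ℝ)).symm ((Matrix.toLin' W) y)‖^2 = ∑ j, ((W *ᵥ y) j)^2 := by
    rw [hnorm]; simp [Matrix.toLin'_apply]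
  have hx : ‖(WithLp.equiv 2 (Fin n → ℝ)).symm y‖^2 = ∑ j, (y j)^2 := hnorm y
  have h2 : (0:ℝ) ≤ ‖(WithLp.equiv 2 (Fin n → ℝ)).symm ((Matrix.toLin' W) y)‖ := norm_nonneg _
  have h3 : (0:ℝ) ≤ ‖(WithLp.equiv 2 (Fin n → ℝ)).symm y‖ := norm_nonneg _
  have h4 : (0:ℝ) ≤ specNorm W := norm_nonneg _
  rw [← hy, ← hx]
  unfold specNorm
  nlinarith [h]

lemma rowkey {n k : ℕ} (V : Matrix (Fin n) (Fin k) ℝ) (hV : Vᵀ * V = 1)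
    (W : Matrix (Fin n) (Fin n) ℝ) : frobSq (Vᵀ * Wᵀ) ≤ (k:ℝ) * specNorm W ^ 2 := by
  unfold frobSq
  have hentry : ∀ i j, (Vᵀ * Wᵀ) i j = (W *ᵥ fun l => V l i) j := by
    intro i j; simp [mul_apply, mulVec, dotProduct, mul_comm]
  calc ∑ i, ∑ j, ((Vᵀ * Wᵀ) i j)^2
      = ∑ i : Fin k, ∑ j, ((W *ᵥ fun l => V l i) j)^2 :=
        Finset.sum_congr rfl fun i _ => Finset.sum_congr rfl fun j _ => by rw [hentry]
    _ ≤ ∑ i : Fin k, specNorm W ^ 2 * ∑ l, (V l i)^2 :=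
        Finset.sum_le_sum fun i _ => spec_bound W _
    _ = ∑ i : Fin k, specNorm W ^ 2 := by
        refine Finset.sum_congr rfl fun i _ => ?_
        have h5 : ∑ l, (V l i)^2 = (Vᵀ * V) i i := by simp [mul_apply, sq]
        rw [h5, hV, Matrix.one_apply_eq, mul_one]
    _ = (k:ℝ) * specNorm W ^ 2 := by simp [mul_comm]

lemma mip_amgm {n : ℕ} (M X : Matrix (Fin n) (Fin n) ℝ) :
    mip M X ≤ 1/2 * frobSq M + 1/2 * frobSq X := by
  have h : mip M X = ∑ i, ∑ j, M i j * X i j := by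
    simp [mip, Matrix.trace, Matrix.diag, mul_apply]
  rw [h]
  unfold frobSq
  calc ∑ i, ∑ j, M i j * X i j
      ≤ ∑ i, ∑ j, (1/2 * (M i j)^2 + 1/2 * (X i j)^2) :=
        Finset.sum_le_sum fun i _ => Finset.sum_le_sum fun j _ => by
          nlinarith [sq_nonneg (M i j - X i j)]
    _ = 1/2 * (∑ i, ∑ j, (M i j)^2) + 1/2 * ∑ i, ∑ j, (X i j)^2 := by
        simp [Finset.sum_add_distrib, Finset.mul_sum]

theorem sos_spectral_hoelder_II (n k : ℕ) (V V₀ : Matrix (Fin n) (Fin k) ℝ)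
    (M W : Matrix (Fin n) (Fin n) ℝ)
    (hV : Vᵀ * V = 1) (hV₀ : V₀ᵀ * V₀ = 1)
    (hM : (1 - V * Vᵀ) * M * (1 - V₀ * V₀ᵀ) = 0) (hW : Wᵀ = W) :
    mip M W ≤ (3 / 2) * frobSq M + 2 * k * (specNorm W) ^ 2 := by
  have expand : (1 - V * Vᵀ) * M * (1 - V₀ * V₀ᵀ) =
      M - V * Vᵀ * M - M * (V₀ * V₀ᵀ) + V * Vᵀ * M * (V₀ * V₀ᵀ) := by
    noncomm_ring
  have hM' : M = V * Vᵀ * M + M * (V₀ * V₀ᵀ) - V * Vᵀ * M * (V₀ * V₀ᵀ) := by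
    have h := hM
    rw [expand] at h
    apply eq_of_sub_eq_zero
    rw [← h]; abel
  have dec : mip M W = mip M (V * Vᵀ * W) + mip M (W * (V₀ * V₀ᵀ))
      - mip M (V * Vᵀ * W * (V₀ * V₀ᵀ)) := by
    unfold mip
    nth_rewrite 1 [hM']
    rw [Matrix.sub_mul, Matrix.add_mul, Matrix.trace_sub, Matrix.trace_add]
    congr 1
    · congr 1
      · -- trace (V*Vᵀ*M*Wᵀ) = trace (M * (V*Vᵀ*W)ᵀ)
        rw [transpose_mul, transpose_mul, transpose_transpose, hW,
          Matrix.trace_mul_cycle (V * Vᵀ) M W, Matrix.trace_mul_comm]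
      · -- trace (M*(V₀*V₀ᵀ)*Wᵀ) = trace (M * (W*(V₀*V₀ᵀ))ᵀ)
        rw [transpose_mul, transpose_mul, transpose_transpose, hW, Matrix.mul_assoc]
    · -- trace (V*Vᵀ*M*(V₀*V₀ᵀ)*Wᵀ) = trace (M * (V*Vᵀ*W*(V₀*V₀ᵀ))ᵀ)
      rw [transpose_mul, transpose_mul, transpose_mul, transpose_mul,
        transpose_transpose, transpose_transpose, hW]
      rw [Matrix.trace_mul_cycle (V * Vᵀ * M) (V₀ * V₀ᵀ) W,
        Matrix.trace_mul_cycle W (V * Vᵀ * M) (V₀ * V₀ᵀ), Matrix.trace_mul_comm M]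
      simp only [Matrix.mul_assoc]
  have bA : frobSq (V * Vᵀ * W) ≤ (k:ℝ) * specNorm W ^ 2 := by
    rw [Matrix.mul_assoc, frobSq_unitary_left V hV,
      show (Vᵀ : Matrix (Fin k) (Fin n) ℝ) * W = Vᵀ * Wᵀ from by rw [hW]]
    exact rowkey V hV W
  have bB : frobSq (W * (V₀ * V₀ᵀ)) ≤ (k:ℝ) * specNorm W ^ 2 := by
    rw [← frobSq_transpose, transpose_mul, transpose_mul, transpose_transpose,
      Matrix.mul_assoc, frobSq_unitary_left V₀ hV₀]
    exact rowkey V₀ hV₀ W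
  have bC : frobSq (V * Vᵀ * W * (V₀ * V₀ᵀ)) ≤ (k:ℝ) * specNorm W ^ 2 := by
    have e1 : V * Vᵀ * W * (V₀ * V₀ᵀ) = V * (Vᵀ * (W * (V₀ * V₀ᵀ))) := by
      simp only [Matrix.mul_assoc]
    rw [e1, frobSq_unitary_left V hV]
    calc frobSq (Vᵀ * (W * (V₀ * V₀ᵀ))) ≤ frobSq (W * (V₀ * V₀ᵀ)) :=
          frobSq_contract_left V hV _
      _ ≤ (k:ℝ) * specNorm W ^ 2 := bB
  have hA := mip_amgm M (V * Vᵀ * W)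
  have hB := mip_amgm M (W * (V₀ * V₀ᵀ))
  have hC := mip_amgm M (-(V * Vᵀ * W * (V₀ * V₀ᵀ)))
  have hCn : mip M (-(V * Vᵀ * W * (V₀ * V₀ᵀ))) = -mip M (V * Vᵀ * W * (V₀ * V₀ᵀ)) := by
    simp [mip, transpose_neg, Matrix.mul_neg]
  have hCf : frobSq (-(V * Vᵀ * W * (V₀ * V₀ᵀ))) = frobSq (V * Vᵀ * W * (V₀ * V₀ᵀ)) := by
    unfold frobSq; simp
  have hks : (0:ℝ) ≤ (k:ℝ) * specNorm W ^ 2 := by positivity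
  rw [dec]
  rw [hCn, hCf] at hC
  nlinarith [hA, hB, hC, bA, bB, bC, hks]
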